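/- Let G be a split graph with clique K = {k_1,…,k_p} and independent set I = {l_1,…,l_q}. Let G' be the graph whose vertex set consists of the vertices of G, a disjoint copy {m_1,…,m_p} ∪ {n_1,…,n_q} of them, and four new vertices k, l, m, n, and whose edges are: all edges of G joining K to I (the clique edges inside K are not included); an edge m_i n_j whenever k_i l_j is an edge of G; all edges between {k, k_1,…,k_p} and {m, m_1,…,m_p}; and the pendant edges l–k and n–m. Then for every positive integer k₀: G has a secure dominating set of cardinality at most k₀ if and only if G' has a secure dominating set of cardinality at most 2k₀ + 2. -/

import Mathlib

/-- `D` is a dominating set of `G`: every vertex outside `D` has a neighbour in `D`. -/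
def Dominates {V : Type*} (G : SimpleGraph V) (D : Set V) : Prop :=
  ∀ u, u ∉ D → ∃ v ∈ D, G.Adj u v

/-- `S` is a secure dominating set of `G`. -/
def SecureDominates {V : Type*} (G : SimpleGraph V) (S : Set V) : Prop :=
  Dominates G S ∧
    ∀ u, u ∉ S → ∃ v ∈ S, G.Adj u v ∧ Dominates G ((S \ {v}) ∪ {u})

/-- The graph `G'` obtained from a split graph `G` with clique `K` and independent set `I`.
Vertices: the original vertices (`Sum.inl u`), a disjoint copy of them
(`Sum.inr (Sum.inl u)`), and four new vertices `k = Sum.inr (Sum.inr 0)`,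
`l = Sum.inr (Sum.inr 1)`, `m = Sum.inr (Sum.inr 2)`, `n = Sum.inr (Sum.inr 3)`.
Edges: all edges of `G` joining `K` to `I` (the clique edges inside `K` are not included);
an edge between the copies of `kᵢ ∈ K` and `lⱼ ∈ I` whenever `kᵢ lⱼ` is an edge of `G`;
all edges between `{k} ∪ K` and the copy `{m} ∪ K`-copy; and the pendant edges
`l - k` and `n - m`. -/
def splitBigExt {V : Type*} (G : SimpleGraph V) (K I : Set V) :
    SimpleGraph (V ⊕ V ⊕ Fin 4) :=
  SimpleGraph.fromRel (fun a b =>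
    (∃ u v, a = Sum.inl u ∧ b = Sum.inl v ∧ G.Adj u v ∧ u ∈ K ∧ v ∈ I) ∨
    (∃ u v, a = Sum.inr (Sum.inl u) ∧ b = Sum.inr (Sum.inl v) ∧ G.Adj u v ∧ u ∈ K ∧ v ∈ I) ∨
    (∃ u v, a = Sum.inl u ∧ u ∈ K ∧ b = Sum.inr (Sum.inl v) ∧ v ∈ K) ∨
    (∃ u, a = Sum.inl u ∧ u ∈ K ∧ b = Sum.inr (Sum.inr 2)) ∨
    (∃ v, a = Sum.inr (Sum.inr 0) ∧ b = Sum.inr (Sum.inl v) ∧ v ∈ K) ∨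
    (a = Sum.inr (Sum.inr 0) ∧ b = Sum.inr (Sum.inr 2)) ∨
    (a = Sum.inr (Sum.inr 1) ∧ b = Sum.inr (Sum.inr 0)) ∨
    (a = Sum.inr (Sum.inr 3) ∧ b = Sum.inr (Sum.inr 2)))

namespace SDWork

variable {V : Type*}

abbrev vA (u : V) : V ⊕ V ⊕ Fin 4 := Sum.inl u
abbrev vB (u : V) : V ⊕ V ⊕ Fin 4 := Sum.inr (Sum.inl u)
abbrev vk : V ⊕ V ⊕ Fin 4 := Sum.inr (Sum.inr 0)
abbrev vl : V ⊕ V ⊕ Fin 4 := Sum.inr (Sum.inr 1)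
abbrev vm : V ⊕ V ⊕ Fin 4 := Sum.inr (Sum.inr 2)
abbrev vn : V ⊕ V ⊕ Fin 4 := Sum.inr (Sum.inr 3)

variable (G : SimpleGraph V) (K I : Set V)

lemma adj_AA {u v : V} : (splitBigExt G K I).Adj (vA u) (vA v) ↔
    G.Adj u v ∧ ((u ∈ K ∧ v ∈ I) ∨ (v ∈ K ∧ u ∈ I)) := by
  simp only [splitBigExt, SimpleGraph.fromRel_adj]
  constructor
  · rintro ⟨hne, h | h⟩ <;> aesop (add safe SimpleGraph.Adj.symm)
  · rintro ⟨hadj, h | h⟩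
    · exact ⟨by simpa using hadj.ne, Or.inl (Or.inl ⟨u, v, rfl, rfl, hadj, h.1, h.2⟩)⟩
    · exact ⟨by simpa using hadj.ne, Or.inr (Or.inl ⟨v, u, rfl, rfl, hadj.symm, h.1, h.2⟩)⟩

lemma adj_BB {u v : V} : (splitBigExt G K I).Adj (vB u) (vB v) ↔
    G.Adj u v ∧ ((u ∈ K ∧ v ∈ I) ∨ (v ∈ K ∧ u ∈ I)) := by
  simp only [splitBigExt, SimpleGraph.fromRel_adj]
  constructor
  · rintro ⟨hne, h | h⟩ <;> aesop (add safe SimpleGraph.Adj.symm)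
  · rintro ⟨hadj, h | h⟩
    · exact ⟨by simpa using hadj.ne, Or.inl (Or.inr (Or.inl ⟨u, v, rfl, rfl, hadj, h.1, h.2⟩))⟩
    · exact ⟨by simpa using hadj.ne, Or.inr (Or.inr (Or.inl ⟨v, u, rfl, rfl, hadj.symm, h.1, h.2⟩))⟩

lemma adj_AB {u v : V} : (splitBigExt G K I).Adj (vA u) (vB v) ↔ (u ∈ K ∧ v ∈ K) := by
  simp only [splitBigExt, SimpleGraph.fromRel_adj]
  constructor
  · rintro ⟨hne, h | h⟩ <;> aesop (add safe SimpleGraph.Adj.symm)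
  · rintro ⟨h1, h2⟩
    exact ⟨by simp, Or.inl (Or.inr (Or.inr (Or.inl ⟨u, v, rfl, h1, rfl, h2⟩)))⟩

lemma adj_Am {u : V} : (splitBigExt G K I).Adj (vA u) vm ↔ u ∈ K := by
  simp only [splitBigExt, SimpleGraph.fromRel_adj]
  constructor
  · rintro ⟨hne, h | h⟩ <;> aesop (add safe SimpleGraph.Adj.symm)
  · intro h
    refine ⟨by simp, Or.inl ?_⟩
    refine Or.inr (Or.inr (Or.inr (Or.inl ?_)))
    exact ⟨u, rfl, h, by first | rfl | trivial⟩

lemma adj_Bk {v : V} : (splitBigExt G K I).Adj (vB v) vk ↔ v ∈ K := by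
  simp only [splitBigExt, SimpleGraph.fromRel_adj]
  constructor
  · rintro ⟨hne, h | h⟩ <;> aesop (add safe SimpleGraph.Adj.symm)
  · intro h
    refine ⟨by simp, Or.inr ?_⟩
    refine Or.inr (Or.inr (Or.inr (Or.inr (Or.inl ?_))))
    exact ⟨v, by first | rfl | trivial, rfl, h⟩

lemma adj_km : (splitBigExt G K I).Adj vk vm := by
  simp only [splitBigExt, SimpleGraph.fromRel_adj]
  exact ⟨by simp, Or.inl (by simp)⟩

lemma adj_kl : (splitBigExt G K I).Adj vk vl := by
  simp only [splitBigExt, SimpleGraph.fromRel_adj]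
  exact ⟨by simp, Or.inr (by simp)⟩

lemma adj_mn : (splitBigExt G K I).Adj vm vn := by
  simp only [splitBigExt, SimpleGraph.fromRel_adj]
  exact ⟨by simp, Or.inr (by simp)⟩

end SDWork

namespace SDWork2
open SDWork
variable {V : Type*} {G : SimpleGraph V} {K I : Set V}

lemma neighbors_A {x : V} {z} (h : (splitBigExt G K I).Adj (Sum.inl x) z) :
    (∃ v, z = vA v ∧ G.Adj x v ∧ ((x ∈ K ∧ v ∈ I) ∨ (v ∈ K ∧ x ∈ I))) ∨
    (∃ v, z = vB v ∧ x ∈ K ∧ v ∈ K) ∨ (z = vm ∧ x ∈ K) := by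
  simp only [splitBigExt, SimpleGraph.fromRel_adj] at h
  obtain ⟨hne, h | h⟩ := h <;> aesop (add safe SimpleGraph.Adj.symm)

lemma neighbors_B {x : V} {z} (h : (splitBigExt G K I).Adj (Sum.inr (Sum.inl x)) z) :
    (∃ v, z = vB v ∧ G.Adj x v ∧ ((x ∈ K ∧ v ∈ I) ∨ (v ∈ K ∧ x ∈ I))) ∨
    (∃ v, z = vA v ∧ x ∈ K ∧ v ∈ K) ∨ (z = vk ∧ x ∈ K) := by
  simp only [splitBigExt, SimpleGraph.fromRel_adj] at h
  obtain ⟨hne, h | h⟩ := h <;> aesop (add safe SimpleGraph.Adj.symm)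

lemma neighbors_l {z} (h : (splitBigExt G K I).Adj vl z) : z = vk := by
  simp only [splitBigExt, SimpleGraph.fromRel_adj] at h
  obtain ⟨hne, h | h⟩ := h <;> aesop

lemma neighbors_n {z} (h : (splitBigExt G K I).Adj vn z) : z = vm := by
  simp only [splitBigExt, SimpleGraph.fromRel_adj] at h
  obtain ⟨hne, h | h⟩ := h <;> aesop

lemma neighbors_k {z} (h : (splitBigExt G K I).Adj vk z) :
    (∃ v, z = vB v ∧ v ∈ K) ∨ z = vm ∨ z = vl := by
  simp only [splitBigExt, SimpleGraph.fromRel_adj] at h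
  obtain ⟨hne, h | h⟩ := h <;> aesop

lemma neighbors_m {z} (h : (splitBigExt G K I).Adj vm z) :
    (∃ v, z = vA v ∧ v ∈ K) ∨ z = vk ∨ z = vn := by
  simp only [splitBigExt, SimpleGraph.fromRel_adj] at h
  obtain ⟨hne, h | h⟩ := h <;> aesop

end SDWork2

namespace SDWork3
open SDWork

lemma dominates_map {W : Type*} {H : SimpleGraph W} (f : W ≃ W)
    (hf : ∀ a b, H.Adj (f a) (f b) ↔ H.Adj a b)
    {D : Set W} (h : Dominates H D) : Dominates H (f '' D) := by
  intro u hu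
  obtain ⟨a, rfl⟩ := f.surjective u
  have ha : a ∉ D := fun h' => hu ⟨a, h', rfl⟩
  obtain ⟨v, hv, hadj⟩ := h a ha
  exact ⟨f v, ⟨v, hv, rfl⟩, (hf a v).2 hadj⟩

lemma secure_map {W : Type*} {H : SimpleGraph W} (f : W ≃ W)
    (hf : ∀ a b, H.Adj (f a) (f b) ↔ H.Adj a b)
    {S : Set W} (h : SecureDominates H S) : SecureDominates H (f '' S) := by
  constructor
  · exact dominates_map f hf h.1
  · intro u hu
    obtain ⟨a, rfl⟩ := f.surjective u
    have ha : a ∉ S := fun h' => hu ⟨a, h', rfl⟩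
    obtain ⟨v, hv, hadj, hdom⟩ := h.2 a ha
    refine ⟨f v, ⟨v, hv, rfl⟩, (hf a v).2 hadj, ?_⟩
    have he : (f '' S \ {f v}) ∪ {f a} = f '' ((S \ {v}) ∪ {a}) := by
      rw [Set.image_union, Set.image_diff f.injective, Set.image_singleton, Set.image_singleton]
    rw [he]
    exact dominates_map f hf hdom

def Defended {W : Type*} (H : SimpleGraph W) (S : Set W) (u : W) : Prop :=
  u ∉ S → ∃ v ∈ S, H.Adj u v ∧ Dominates H ((S \ {v}) ∪ {u})

lemma secure_of_defended {W : Type*} {H : SimpleGraph W} {S : Set W}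
    (h1 : Dominates H S) (h2 : ∀ u, Defended H S u) : SecureDominates H S :=
  ⟨h1, fun u hu => h2 u hu⟩

lemma defended_map {W : Type*} {H : SimpleGraph W} (f : W ≃ W)
    (hf : ∀ a b, H.Adj (f a) (f b) ↔ H.Adj a b)
    {S : Set W} (hS : f '' S = S) {u} (h : Defended H S u) : Defended H S (f u) := by
  intro hu
  have hu' : u ∉ S := fun h' => hu (hS ▸ ⟨u, h', rfl⟩)
  obtain ⟨v, hv, hadj, hdom⟩ := h hu'
  refine ⟨f v, hS ▸ ⟨v, hv, rfl⟩, (hf u v).2 hadj, ?_⟩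
  have he : (S \ {f v}) ∪ {f u} = f '' ((S \ {v}) ∪ {u}) := by
    conv_lhs => rw [← hS]
    rw [Set.image_union, Set.image_diff f.injective, Set.image_singleton, Set.image_singleton]
  rw [he]
  exact dominates_map f hf hdom

variable {V : Type*}

def swapF : (V ⊕ V ⊕ Fin 4) → (V ⊕ V ⊕ Fin 4) := fun x =>
  match x with
  | .inl u => .inr (.inl u)
  | .inr (.inl u) => .inl u
  | .inr (.inr i) => .inr (.inr (i + 2))

lemma swapF_inv : Function.Involutive (swapF (V := V)) := by
  rintro (u | u | i) <;> simp [swapF]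
  · show i + 2 + 2 = i
    rw [add_assoc]
    norm_num
    rfl

variable {G : SimpleGraph V} {K I : Set V}

lemma swap_adj_aux {a b} (h : (splitBigExt G K I).Adj a b) :
    (splitBigExt G K I).Adj (swapF a) (swapF b) := by
  rcases a with u | u | i
  · rcases SDWork2.neighbors_A h with ⟨v, rfl, h1, h2⟩ | ⟨v, rfl, h1, h2⟩ | ⟨rfl, h1⟩
    · exact (adj_BB G K I).2 ⟨h1, h2⟩
    · exact ((adj_AB G K I).2 ⟨h2, h1⟩).symm
    · exact (adj_Bk G K I).2 h1
  · rcases SDWork2.neighbors_B h with ⟨v, rfl, h1, h2⟩ | ⟨v, rfl, h1, h2⟩ | ⟨rfl, h1⟩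
    · exact (adj_AA G K I).2 ⟨h1, h2⟩
    · exact ((adj_AB G K I).2 ⟨h1, h2⟩)
    · exact (adj_Am G K I).2 h1
  · fin_cases i
    · rcases SDWork2.neighbors_k h with ⟨v, rfl, h1⟩ | rfl | rfl
      · exact ((adj_Am G K I).2 h1).symm
      · exact (adj_km G K I).symm
      · exact adj_mn G K I
    · rw [SDWork2.neighbors_l h]
      exact (adj_mn G K I).symm
    · rcases SDWork2.neighbors_m h with ⟨v, rfl, h1⟩ | rfl | rfl
      · exact ((adj_Bk G K I).2 h1).symm
      · exact adj_km G K I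
      · exact adj_kl G K I
    · rw [SDWork2.neighbors_n h]
      exact (adj_kl G K I).symm

def swapE : (V ⊕ V ⊕ Fin 4) ≃ (V ⊕ V ⊕ Fin 4) := swapF_inv.toPerm

lemma swapE_apply (x : V ⊕ V ⊕ Fin 4) : swapE x = swapF x := rfl

lemma swap_adj (a b) : (splitBigExt G K I).Adj (swapF a) (swapF b) ↔
    (splitBigExt G K I).Adj a b := by
  constructor
  · intro h
    have := swap_adj_aux (G := G) (K := K) (I := I) h
    rwa [swapF_inv a, swapF_inv b] at this
  · exact swap_adj_aux

end SDWork3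

namespace SDWork4
variable {V : Type*} {G : SimpleGraph V} {K I : Set V}

lemma mem_KI (hpart : K ∪ I = Set.univ) (x : V) : x ∈ K ∨ x ∈ I := by
  have : x ∈ K ∪ I := hpart ▸ Set.mem_univ x
  exact this

lemma secure_of_conditions (hpart : K ∪ I = Set.univ) (hdisj : Disjoint K I)
    (hK : G.IsClique K) (S : Set V)
    (h1 : ∀ x ∈ I, x ∉ S → ∃ s, s ∈ S ∧ s ∈ K ∧ G.Adj x s)
    (h2 : ∀ b ∈ K, b ∉ S → ∃ z ∈ S, G.Adj b z)
    (h3 : ∀ x ∈ I, x ∉ S → ∃ s, s ∈ S ∧ s ∈ K ∧ G.Adj x s ∧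
        (∀ y ∈ I, y ∉ S → y ≠ x → ∃ t, t ∈ S ∧ t ∈ K ∧ t ≠ s ∧ G.Adj y t) ∧
        ((∃ t, t ∈ S ∧ t ∈ K ∧ t ≠ s) ∨
          ∀ b ∈ K, b ∉ S → (∃ w, w ∈ S ∧ w ∈ I ∧ G.Adj b w) ∨ G.Adj b x))
    (h4 : ∀ b ∈ K, b ∉ S → (∃ w, w ∈ S ∧ w ∈ I ∧ G.Adj b w) ∨
        ∃ v, v ∈ S ∧ v ∈ K ∧ ∀ y ∈ I, y ∉ S →
          (∃ t, t ∈ S ∧ t ∈ K ∧ t ≠ v ∧ G.Adj y t) ∨ G.Adj y b) :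
    SecureDominates G S := by
  have hKI : ∀ {a : V}, a ∈ K → a ∈ I → False :=
    fun h h' => Set.disjoint_left.mp hdisj h h'
  have memD : ∀ {a w u : V}, a ∈ S → a ≠ w → a ∈ (S \ {w}) ∪ {u} := by
    intro a w u ha hne
    exact Or.inl ⟨ha, by simpa using hne⟩
  have memU : ∀ {w u : V}, u ∈ (S \ {w}) ∪ {u} := fun {w u} => Or.inr rfl
  constructor
  · intro u hu
    rcases mem_KI hpart u with h | h
    · exact h2 u h hu
    · obtain ⟨s, hsS, _, hadj⟩ := h1 u h hu
      exact ⟨s, hsS, hadj⟩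
  · intro u hu
    rcases mem_KI hpart u with huK | huI
    · rcases h4 u huK hu with ⟨w, hwS, hwI, hadj⟩ | ⟨v, hvS, hvK, hv⟩
      · refine ⟨w, hwS, hadj, ?_⟩
        intro z hz
        have hznu : z ≠ u := fun h => hz (h ▸ memU)
        rcases mem_KI hpart z with hzK | hzI
        · exact ⟨u, memU, hK hzK huK hznu⟩
        · by_cases hzw : z = w
          · exact ⟨u, memU, by rw [hzw]; exact hadj.symm⟩
          · have hzS : z ∉ S := fun h => hz (memD h hzw)
            obtain ⟨s, hsS, hsK, hadj2⟩ := h1 z hzI hzS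
            have hsw : s ≠ w := fun h => hKI hsK (h ▸ hwI)
            exact ⟨s, memD hsS hsw, hadj2⟩
      · have hvu : v ≠ u := fun h => hu (h ▸ hvS)
        refine ⟨v, hvS, (hK hvK huK hvu).symm, ?_⟩
        intro z hz
        have hznu : z ≠ u := fun h => hz (h ▸ memU)
        rcases mem_KI hpart z with hzK | hzI
        · exact ⟨u, memU, hK hzK huK hznu⟩
        · have hzv : z ≠ v := fun h => hKI hvK (h ▸ hzI)
          have hzS : z ∉ S := fun h => hz (memD h hzv)
          rcases hv z hzI hzS with ⟨t, htS, htK, htv, hadj2⟩ | hadj2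
          · exact ⟨t, memD htS htv, hadj2⟩
          · exact ⟨u, memU, hadj2⟩
    · obtain ⟨s, hsS, hsK, hadj, hin, hkpart⟩ := h3 u huI hu
      refine ⟨s, hsS, hadj, ?_⟩
      intro z hz
      have hznu : z ≠ u := fun h => hz (h ▸ memU)
      rcases mem_KI hpart z with hzK | hzI
      · by_cases hzs : z = s
        · exact ⟨u, memU, by rw [hzs]; exact hadj.symm⟩
        · have hzS : z ∉ S := fun h => hz (memD h hzs)
          rcases hkpart with ⟨t, htS, htK, hts⟩ | hb
          · have hzt : z ≠ t := fun h => hzS (h ▸ htS)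
            exact ⟨t, memD htS hts, hK hzK htK hzt⟩
          · rcases hb z hzK hzS with ⟨w, hwS, hwI, hadj2⟩ | hadj2
            · have hws : w ≠ s := fun h => hKI hsK (h ▸ hwI)
              exact ⟨w, memD hwS hws, hadj2⟩
            · exact ⟨u, memU, hadj2⟩
      · have hzs : z ≠ s := fun h => hKI hsK (h ▸ hzI)
        have hzS : z ∉ S := fun h => hz (memD h hzs)
        obtain ⟨t, htS, htK, hts, hadj2⟩ := hin z hzI hzS hznu
        exact ⟨t, memD htS hts, hadj2⟩

end SDWork4

namespace SDWork5
variable {V : Type*} [Fintype V] {G : SimpleGraph V} {K I : Set V}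

lemma ncard_I_le (hdisj : Disjoint K I) (S₀ : Set V)
    (hF2 : ∀ x ∈ I, x ∉ S₀ → ∃ s, s ∈ S₀ ∧ s ∈ K ∧ G.Adj x s ∧
        ∀ y ∈ I, y ∉ S₀ → y ≠ x → ∃ t, t ∈ S₀ ∧ t ∈ K ∧ t ≠ s ∧ G.Adj y t)
    (hpriv : ∀ v, v ∈ S₀ → v ∈ K →
        ∃ y, y ∈ I ∧ y ∉ S₀ ∧ ∀ t, t ∈ S₀ → t ∈ K → G.Adj y t → t = v) :
    I.ncard ≤ S₀.ncard := by
  classical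
  have key : ∀ x ∈ I, x ∉ S₀ → ∃ s, s ∈ S₀ ∧ s ∈ K ∧
      (∀ t, t ∈ S₀ → t ∈ K → G.Adj x t → t = s) ∧
      (∀ y ∈ I, y ∉ S₀ → y ≠ x → ∃ t, t ∈ S₀ ∧ t ∈ K ∧ t ≠ s ∧ G.Adj y t) := by
    intro x hxI hxS
    obtain ⟨s, hsS, hsK, hadj, hin⟩ := hF2 x hxI hxS
    obtain ⟨y, hyI, hyS, hy⟩ := hpriv s hsS hsK
    have hyx : y = x := by
      by_contra hne
      obtain ⟨t, htS, htK, hts, hadj2⟩ := hin y hyI hyS hne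
      exact hts (hy t htS htK hadj2)
    refine ⟨s, hsS, hsK, ?_, hin⟩
    intro t htS htK hadj2
    exact hy t htS htK (hyx ▸ hadj2)
  choose! f hf1 hf2 hf3 hf4 using key
  have h1 : (I \ S₀).ncard ≤ (S₀ ∩ K).ncard := by
    refine Set.ncard_le_ncard_of_injOn f ?_ ?_ (Set.toFinite _)
    · rintro x ⟨hxI, hxS⟩
      exact ⟨hf1 x hxI hxS, hf2 x hxI hxS⟩
    · rintro x ⟨hxI, hxS⟩ x' ⟨hxI', hxS'⟩ heq
      by_contra hne
      obtain ⟨t, htS, htK, hts, hadj2⟩ := hf4 x' hxI' hxS' x hxI hxS hne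
      exact hts (heq ▸ hf3 x hxI hxS t htS htK hadj2)
  have h2 : (S₀ ∩ K).ncard + (I ∩ S₀).ncard ≤ S₀.ncard := by
    have hd : Disjoint (S₀ ∩ K) (I ∩ S₀) := by
      refine Set.disjoint_left.mpr ?_
      rintro a ⟨_, haK⟩ ⟨haI, _⟩
      exact Set.disjoint_left.mp hdisj haK haI
    calc (S₀ ∩ K).ncard + (I ∩ S₀).ncard = ((S₀ ∩ K) ∪ (I ∩ S₀)).ncard :=
        (Set.ncard_union_eq hd (Set.toFinite _) (Set.toFinite _)).symm
      _ ≤ S₀.ncard := Set.ncard_le_ncard (by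
          rintro a (⟨h, _⟩ | ⟨_, h⟩) <;> exact h) (Set.toFinite _)
  have h3 : I.ncard = (I ∩ S₀).ncard + (I \ S₀).ncard :=
    (Set.ncard_inter_add_ncard_diff_eq_ncard I S₀ (Set.toFinite _)).symm
  omega

end SDWork5

namespace SDWork6
open SDWork SDWork2 SDWork3 SDWork4
variable {V : Type*} {G : SimpleGraph V} {K I : Set V}

lemma forward_secure (hpart : K ∪ I = Set.univ) (hdisj : Disjoint K I)
    (D : Set V)
    (c1 : ∀ x ∈ I, x ∉ D → ∃ s, s ∈ D ∧ s ∈ K ∧ G.Adj x s)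
    (c2 : (∃ v, v ∈ D ∧ v ∈ K) ∨ ∀ b ∈ K, b ∉ D → ∃ w, w ∈ D ∧ w ∈ I ∧ G.Adj b w)
    (c3 : ∀ x ∈ I, x ∉ D → ∃ s, s ∈ D ∧ s ∈ K ∧ G.Adj x s ∧
        ∀ y ∈ I, y ∉ D → y ≠ x → ∃ t, t ∈ D ∧ t ∈ K ∧ t ≠ s ∧ G.Adj y t)
    (c4 : ∀ a ∈ K, a ∉ D → (∃ w, w ∈ D ∧ w ∈ I ∧ G.Adj a w) ∨
        ∃ v, v ∈ D ∧ v ∈ K ∧ ∀ y ∈ I, y ∉ D → ∃ t, t ∈ D ∧ t ∈ K ∧ t ≠ v ∧ G.Adj y t) :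
    SecureDominates (splitBigExt G K I)
      ((vA '' D) ∪ ((vB : V → V ⊕ V ⊕ Fin 4) '' D) ∪ {vk, vm}) := by
  classical
  have hKI : ∀ {a : V}, a ∈ K → a ∈ I → False :=
    fun h h' => Set.disjoint_left.mp hdisj h h'
  set SF : Set (V ⊕ V ⊕ Fin 4) :=
    (vA '' D) ∪ ((vB : V → V ⊕ V ⊕ Fin 4) '' D) ∪ {vk, vm} with hSFdef
  have hSF_A : ∀ y : V, vA y ∈ SF ↔ y ∈ D := by intro y; rw [hSFdef]; simp
  have hSF_B : ∀ y : V, vB y ∈ SF ↔ y ∈ D := by intro y; rw [hSFdef]; simp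
  have hSF_k : vk ∈ SF := by rw [hSFdef]; simp
  have hSF_m : vm ∈ SF := by rw [hSFdef]; simp
  have memD' : ∀ {z d u' : V ⊕ V ⊕ Fin 4}, z ∈ SF → z ≠ d → z ∈ (SF \ {d}) ∪ {u'} :=
    fun h hne => Or.inl ⟨h, by simpa using hne⟩
  have memU' : ∀ {d u' : V ⊕ V ⊕ Fin 4}, u' ∈ (SF \ {d}) ∪ {u'} := fun {d u'} => Or.inr rfl
  -- Defended for A-vertices
  have defA : ∀ x : V, Defended (splitBigExt G K I) SF (vA x) := by
    intro x hx
    have hxD : x ∉ D := fun h => hx ((hSF_A x).2 h)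
    rcases mem_KI hpart x with hxK | hxI
    · -- x ∈ K
      rcases c4 x hxK hxD with ⟨w, hwD, hwI, hadj⟩ | ⟨v, hvD, hvK, hv⟩
      · -- defender vA w, w ∈ I
        refine ⟨vA w, (hSF_A w).2 hwD, (adj_AA G K I).2 ⟨hadj, Or.inl ⟨hxK, hwI⟩⟩, ?_⟩
        intro z hz
        rcases z with y | y | i
        · rcases mem_KI hpart y with hyK | hyI
          · refine ⟨vm, memD' hSF_m (by simp), (adj_Am G K I).2 hyK⟩
          · by_cases hyD : y ∈ D
            · have heq : vA y = vA w := by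
                by_contra hne
                exact hz (memD' ((hSF_A y).2 hyD) hne)
              refine ⟨vA x, memU', ?_⟩
              have hyw : y = w := Sum.inl.inj heq
              rw [hyw]
              exact ((adj_AA G K I).2 ⟨hadj, Or.inl ⟨hxK, hwI⟩⟩).symm
            · obtain ⟨s, hsD, hsK, hadj2⟩ := c1 y hyI hyD
              have hne : vA s ≠ vA w := by
                simp only [ne_eq, Sum.inl.injEq]
                exact fun h => hKI hsK (h ▸ hwI)
              exact ⟨vA s, memD' ((hSF_A s).2 hsD) hne,
                (adj_AA G K I).2 ⟨hadj2, Or.inr ⟨hsK, hyI⟩⟩⟩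
        · rcases mem_KI hpart y with hyK | hyI
          · exact ⟨vk, memD' hSF_k (by simp), (adj_Bk G K I).2 hyK⟩
          · by_cases hyD : y ∈ D
            · exact absurd (memD' ((hSF_B y).2 hyD) (by simp)) hz
            · obtain ⟨s, hsD, hsK, hadj2⟩ := c1 y hyI hyD
              exact ⟨vB s, memD' ((hSF_B s).2 hsD) (by simp),
                (adj_BB G K I).2 ⟨hadj2, Or.inr ⟨hsK, hyI⟩⟩⟩
        · fin_cases i
          · exact absurd (memD' hSF_k (by simp)) hz
          · exact ⟨vk, memD' hSF_k (by simp), (adj_kl G K I).symm⟩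
          · exact absurd (memD' hSF_m (by simp)) hz
          · exact ⟨vm, memD' hSF_m (by simp), (adj_mn G K I).symm⟩
      · -- defender vB v, v ∈ K
        refine ⟨vB v, (hSF_B v).2 hvD, (adj_AB G K I).2 ⟨hxK, hvK⟩, ?_⟩
        intro z hz
        rcases z with y | y | i
        · rcases mem_KI hpart y with hyK | hyI
          · exact ⟨vm, memD' hSF_m (by simp), (adj_Am G K I).2 hyK⟩
          · by_cases hyD : y ∈ D
            · exact absurd (memD' ((hSF_A y).2 hyD) (by simp)) hz
            · obtain ⟨s, hsD, hsK, hadj2⟩ := c1 y hyI hyD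
              exact ⟨vA s, memD' ((hSF_A s).2 hsD) (by simp),
                (adj_AA G K I).2 ⟨hadj2, Or.inr ⟨hsK, hyI⟩⟩⟩
        · rcases mem_KI hpart y with hyK | hyI
          · exact ⟨vk, memD' hSF_k (by simp), (adj_Bk G K I).2 hyK⟩
          · by_cases hyD : y ∈ D
            · have hne : vB y ≠ vB v := by
                simp only [ne_eq, Sum.inr.injEq, Sum.inl.injEq]
                exact fun h => hKI hvK (h ▸ hyI)
              exact absurd (memD' ((hSF_B y).2 hyD) hne) hz
            · obtain ⟨t, htD, htK, htv, hadj2⟩ := hv y hyI hyD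
              have hne : vB t ≠ vB v := by
                simp only [ne_eq, Sum.inr.injEq, Sum.inl.injEq]
                exact htv
              exact ⟨vB t, memD' ((hSF_B t).2 htD) hne,
                (adj_BB G K I).2 ⟨hadj2, Or.inr ⟨htK, hyI⟩⟩⟩
        · fin_cases i
          · exact absurd (memD' hSF_k (by simp)) hz
          · exact ⟨vk, memD' hSF_k (by simp), (adj_kl G K I).symm⟩
          · exact absurd (memD' hSF_m (by simp)) hz
          · exact ⟨vm, memD' hSF_m (by simp), (adj_mn G K I).symm⟩
    · -- x ∈ I
      obtain ⟨s, hsD, hsK, hadj, hin⟩ := c3 x hxI hxD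
      refine ⟨vA s, (hSF_A s).2 hsD, (adj_AA G K I).2 ⟨hadj, Or.inr ⟨hsK, hxI⟩⟩, ?_⟩
      intro z hz
      rcases z with y | y | i
      · rcases mem_KI hpart y with hyK | hyI
        · exact ⟨vm, memD' hSF_m (by simp), (adj_Am G K I).2 hyK⟩
        · by_cases hyD : y ∈ D
          · have hne : vA y ≠ vA s := by
              simp only [ne_eq, Sum.inl.injEq]
              exact fun h => hKI hsK (h ▸ hyI)
            exact absurd (memD' ((hSF_A y).2 hyD) hne) hz
          · have hne : y ≠ x := by
              intro h
              exact hz (h ▸ memU')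
            obtain ⟨t, htD, htK, hts, hadj2⟩ := hin y hyI hyD hne
            have hne2 : vA t ≠ vA s := by
              simp only [ne_eq, Sum.inl.injEq]
              exact hts
            exact ⟨vA t, memD' ((hSF_A t).2 htD) hne2,
              (adj_AA G K I).2 ⟨hadj2, Or.inr ⟨htK, hyI⟩⟩⟩
      · rcases mem_KI hpart y with hyK | hyI
        · exact ⟨vk, memD' hSF_k (by simp), (adj_Bk G K I).2 hyK⟩
        · by_cases hyD : y ∈ D
          · exact absurd (memD' ((hSF_B y).2 hyD) (by simp)) hz
          · obtain ⟨t, htD, htK, hadj2⟩ := c1 y hyI hyD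
            exact ⟨vB t, memD' ((hSF_B t).2 htD) (by simp),
              (adj_BB G K I).2 ⟨hadj2, Or.inr ⟨htK, hyI⟩⟩⟩
      · fin_cases i
        · exact absurd (memD' hSF_k (by simp)) hz
        · exact ⟨vk, memD' hSF_k (by simp), (adj_kl G K I).symm⟩
        · exact absurd (memD' hSF_m (by simp)) hz
        · exact ⟨vm, memD' hSF_m (by simp), (adj_mn G K I).symm⟩
  -- Defended for vl
  have defl : Defended (splitBigExt G K I) SF vl := by
    intro hx
    refine ⟨vk, hSF_k, (adj_kl G K I).symm, ?_⟩
    intro z hz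
    rcases z with y | y | i
    · rcases mem_KI hpart y with hyK | hyI
      · exact ⟨vm, memD' hSF_m (by simp), (adj_Am G K I).2 hyK⟩
      · by_cases hyD : y ∈ D
        · exact absurd (memD' ((hSF_A y).2 hyD) (by simp)) hz
        · obtain ⟨s, hsD, hsK, hadj2⟩ := c1 y hyI hyD
          exact ⟨vA s, memD' ((hSF_A s).2 hsD) (by simp),
            (adj_AA G K I).2 ⟨hadj2, Or.inr ⟨hsK, hyI⟩⟩⟩
    · rcases mem_KI hpart y with hyK | hyI
      · by_cases hyD : y ∈ D
        · exact absurd (memD' ((hSF_B y).2 hyD) (by simp)) hz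
        · rcases c2 with ⟨v, hvD, hvK⟩ | hc2
          · exact ⟨vA v, memD' ((hSF_A v).2 hvD) (by simp),
              ((adj_AB G K I).2 ⟨hvK, hyK⟩).symm⟩
          · obtain ⟨w, hwD, hwI, hadj2⟩ := hc2 y hyK hyD
            exact ⟨vB w, memD' ((hSF_B w).2 hwD) (by simp),
              (adj_BB G K I).2 ⟨hadj2, Or.inl ⟨hyK, hwI⟩⟩⟩
      · by_cases hyD : y ∈ D
        · exact absurd (memD' ((hSF_B y).2 hyD) (by simp)) hz
        · obtain ⟨s, hsD, hsK, hadj2⟩ := c1 y hyI hyD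
          exact ⟨vB s, memD' ((hSF_B s).2 hsD) (by simp),
            (adj_BB G K I).2 ⟨hadj2, Or.inr ⟨hsK, hyI⟩⟩⟩
    · fin_cases i
      · exact ⟨vl, memU', adj_kl G K I⟩
      · exact absurd (memU' (d := vk)) hz
      · exact absurd (memD' hSF_m (by simp)) hz
      · exact ⟨vm, memD' hSF_m (by simp), (adj_mn G K I).symm⟩
  -- swap invariance
  have hswapadj : ∀ a b, (splitBigExt G K I).Adj (swapE a) (swapE b) ↔
      (splitBigExt G K I).Adj a b := fun a b => swap_adj a b
  have hswapset : (swapE : (V ⊕ V ⊕ Fin 4) ≃ _) '' SF = SF := by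
    rw [hSFdef]
    have e1 : (swapE : (V ⊕ V ⊕ Fin 4) ≃ _) '' (vA '' D) = vB '' D := by
      rw [Set.image_image]; rfl
    have e2 : (swapE : (V ⊕ V ⊕ Fin 4) ≃ _) '' ((vB : V → V ⊕ V ⊕ Fin 4) '' D) = vA '' D := by
      rw [Set.image_image]; rfl
    have e3 : (swapE : (V ⊕ V ⊕ Fin 4) ≃ _) '' ({vk, vm} : Set (V ⊕ V ⊕ Fin 4)) = {vm, vk} := by
      rw [Set.image_insert_eq, Set.image_singleton]
      congr 1
    rw [Set.image_union, Set.image_union, e1, e2, e3,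
      Set.union_comm ((vB : V → V ⊕ V ⊕ Fin 4) '' D) (vA '' D), Set.pair_comm]
  -- Dominates
  have hdom : Dominates (splitBigExt G K I) SF := by
    intro z hz
    rcases z with y | y | i
    · rcases mem_KI hpart y with hyK | hyI
      · exact ⟨vm, hSF_m, (adj_Am G K I).2 hyK⟩
      · have hyD : y ∉ D := fun h => hz ((hSF_A y).2 h)
        obtain ⟨s, hsD, hsK, hadj⟩ := c1 y hyI hyD
        exact ⟨vA s, (hSF_A s).2 hsD, (adj_AA G K I).2 ⟨hadj, Or.inr ⟨hsK, hyI⟩⟩⟩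
    · rcases mem_KI hpart y with hyK | hyI
      · exact ⟨vk, hSF_k, (adj_Bk G K I).2 hyK⟩
      · have hyD : y ∉ D := fun h => hz ((hSF_B y).2 h)
        obtain ⟨s, hsD, hsK, hadj⟩ := c1 y hyI hyD
        exact ⟨vB s, (hSF_B s).2 hsD, (adj_BB G K I).2 ⟨hadj, Or.inr ⟨hsK, hyI⟩⟩⟩
    · fin_cases i
      · exact absurd hSF_k hz
      · exact ⟨vk, hSF_k, (adj_kl G K I).symm⟩
      · exact absurd hSF_m hz
      · exact ⟨vm, hSF_m, (adj_mn G K I).symm⟩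
  refine secure_of_defended hdom ?_
  intro u
  rcases u with y | y | i
  · exact defA y
  · have := defended_map swapE hswapadj hswapset (defA y)
    exact this
  · fin_cases i
    · exact fun h => absurd hSF_k h
    · exact defl
    · exact fun h => absurd hSF_m h
    · have := defended_map swapE hswapadj hswapset defl
      exact this

end SDWork6

namespace SDWork7
open SDWork SDWork2 SDWork3
variable {V : Type*} {G : SimpleGraph V} {K I : Set V} {S' : Set (V ⊕ V ⊕ Fin 4)}

lemma sideA_F1 (hdisj : Disjoint K I) (h : Dominates (splitBigExt G K I) S')
    {x : V} (hxI : x ∈ I) (hxS : vA x ∉ S') :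
    ∃ s, vA s ∈ S' ∧ s ∈ K ∧ G.Adj x s := by
  have hKI : ∀ {a : V}, a ∈ K → a ∈ I → False :=
    fun h h' => Set.disjoint_left.mp hdisj h h'
  obtain ⟨z, hzS, hadj⟩ := h (vA x) hxS
  rcases neighbors_A hadj with ⟨v, rfl, h1, h2⟩ | ⟨v, rfl, h1, h2⟩ | ⟨rfl, h1⟩
  · rcases h2 with ⟨hxK, _⟩ | ⟨hvK, _⟩
    · exact absurd hxK (fun hh => hKI hh hxI)
    · exact ⟨v, hzS, hvK, h1⟩
  · exact absurd h1 (fun hh => hKI hh hxI)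
  · exact absurd h1 (fun hh => hKI hh hxI)

lemma sideA_F2 (hdisj : Disjoint K I) (h : SecureDominates (splitBigExt G K I) S')
    {x : V} (hxI : x ∈ I) (hxS : vA x ∉ S') :
    ∃ s, vA s ∈ S' ∧ s ∈ K ∧ G.Adj x s ∧
      ∀ y ∈ I, vA y ∉ S' → y ≠ x → ∃ t, vA t ∈ S' ∧ t ∈ K ∧ t ≠ s ∧ G.Adj y t := by
  have hKI : ∀ {a : V}, a ∈ K → a ∈ I → False :=
    fun h h' => Set.disjoint_left.mp hdisj h h'
  obtain ⟨z, hzS, hadj, hdom⟩ := h.2 (vA x) hxS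
  rcases neighbors_A hadj with ⟨v, rfl, h1, h2⟩ | ⟨v, rfl, h1, h2⟩ | ⟨rfl, h1⟩
  · rcases h2 with ⟨hxK, _⟩ | ⟨hvK, hxI'⟩
    · exact absurd hxK (fun hh => hKI hh hxI)
    · refine ⟨v, hzS, hvK, h1, ?_⟩
      intro y hyI hyS hne
      have hmem : vA y ∉ (S' \ {vA v}) ∪ {vA x} := by
        rintro (⟨m1, _⟩ | m1)
        · exact hyS m1
        · exact hne (Sum.inl.inj m1)
      obtain ⟨z2, hz2, hadj2⟩ := hdom _ hmem
      rcases neighbors_A hadj2 with ⟨t, rfl, a1, a2⟩ | ⟨t, rfl, a1, a2⟩ | ⟨rfl, a1⟩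
      · rcases a2 with ⟨hyK, _⟩ | ⟨htK, _⟩
        · exact absurd hyK (fun hh => hKI hh hyI)
        · rcases hz2 with ⟨m1, m2⟩ | m1
          · refine ⟨t, m1, htK, ?_, a1⟩
            intro hts
            exact m2 (by rw [hts]; rfl)
          · exact absurd (Sum.inl.inj m1 ▸ htK) (fun hh => hKI hh hxI)
      · exact absurd a1 (fun hh => hKI hh hyI)
      · exact absurd a1 (fun hh => hKI hh hyI)
  · exact absurd h1 (fun hh => hKI hh hxI)
  · exact absurd h1 (fun hh => hKI hh hxI)

lemma kl_mem (h : Dominates (splitBigExt G K I) S') : vk ∈ S' ∨ vl ∈ S' := by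
  by_cases hl : vl ∈ S'
  · exact Or.inr hl
  · obtain ⟨z, hz, hadj⟩ := h vl hl
    rw [neighbors_l hadj] at hz
    exact Or.inl hz

lemma mn_mem (h : Dominates (splitBigExt G K I) S') : vm ∈ S' ∨ vn ∈ S' := by
  by_cases hn : vn ∈ S'
  · exact Or.inr hn
  · obtain ⟨z, hz, hadj⟩ := h vn hn
    rw [neighbors_n hadj] at hz
    exact Or.inl hz

lemma sideA_defender (hdisj : Disjoint K I)
    (h : SecureDominates (splitBigExt G K I) S')
    {b : V} (hbK : b ∈ K) (hbS : vA b ∉ S')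
    (horph : ∀ w, vA w ∈ S' → w ∈ I → ¬G.Adj b w) :
    (∃ v₀, vB v₀ ∈ S' ∧ v₀ ∈ K ∧
      ∀ y ∈ I, vB y ∉ S' → ∃ t, vB t ∈ S' ∧ t ∈ K ∧ t ≠ v₀ ∧ G.Adj y t) ∨
    (vm ∈ S' ∧ vn ∈ S') := by
  have hKI : ∀ {a : V}, a ∈ K → a ∈ I → False :=
    fun h h' => Set.disjoint_left.mp hdisj h h'
  obtain ⟨z, hzS, hadj, hdom⟩ := h.2 (vA b) hbS
  rcases neighbors_A hadj with ⟨v, rfl, h1, h2⟩ | ⟨v, rfl, h1, h2⟩ | ⟨rfl, h1⟩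
  · rcases h2 with ⟨_, hvI⟩ | ⟨_, hbI⟩
    · exact absurd h1 (horph v hzS hvI)
    · exact absurd hbI (fun hh => hKI hbK hh)
  · left
    refine ⟨v, hzS, h2, ?_⟩
    intro y hyI hyS
    have hmem : vB y ∉ (S' \ {vB v}) ∪ {vA b} := by
      rintro (⟨m1, _⟩ | m1)
      · exact hyS m1
      · exact absurd (Set.mem_singleton_iff.mp m1) (by simp)
    obtain ⟨z2, hz2, hadj2⟩ := hdom _ hmem
    rcases neighbors_B hadj2 with ⟨t, rfl, a1, a2⟩ | ⟨t, rfl, a1, a2⟩ | ⟨rfl, a1⟩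
    · rcases a2 with ⟨hyK, _⟩ | ⟨htK, _⟩
      · exact absurd hyK (fun hh => hKI hh hyI)
      · rcases hz2 with ⟨m1, m2⟩ | m1
        · refine ⟨t, m1, htK, ?_, a1⟩
          intro hts
          exact m2 (by rw [hts]; rfl)
        · exact absurd (Set.mem_singleton_iff.mp m1) (by simp)
    · exact absurd a1 (fun hh => hKI hh hyI)
    · exact absurd a1 (fun hh => hKI hh hyI)
  · right
    refine ⟨hzS, ?_⟩
    by_contra hn
    have hmem : vn ∉ (S' \ {vm}) ∪ {vA b} := by
      rintro (⟨m1, _⟩ | m1)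
      · exact hn m1
      · exact absurd (Set.mem_singleton_iff.mp m1) (by simp)
    obtain ⟨z2, hz2, hadj2⟩ := hdom _ hmem
    rw [neighbors_n hadj2] at hz2
    rcases hz2 with ⟨_, m2⟩ | m1
    · exact m2 rfl
    · exact absurd (Set.mem_singleton_iff.mp m1) (by simp)

end SDWork7

namespace SDWork8
open SDWork SDWork2 SDWork3 SDWork7
variable {V : Type*} [Fintype V]

lemma hBinj : Function.Injective (fun u : V => (Sum.inr (Sum.inl u) : V ⊕ V ⊕ Fin 4)) := by
  intro a b h
  simpa using h

lemma decomp (S' : Set (V ⊕ V ⊕ Fin 4)) :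
    S'.ncard = (Sum.inl ⁻¹' S' : Set V).ncard +
      ((fun u : V => (Sum.inr (Sum.inl u) : V ⊕ V ⊕ Fin 4)) ⁻¹' S' : Set V).ncard +
      (S' ∩ {vk, vl, vm, vn}).ncard := by
  classical
  have hdec : S' = ((Sum.inl '' (Sum.inl ⁻¹' S')) ∪
      ((fun u : V => (Sum.inr (Sum.inl u) : V ⊕ V ⊕ Fin 4)) ''
        ((fun u : V => (Sum.inr (Sum.inl u) : V ⊕ V ⊕ Fin 4)) ⁻¹' S'))) ∪
      (S' ∩ {vk, vl, vm, vn}) := by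
    ext z
    constructor
    · intro hz
      rcases z with u | u | i
      · exact Or.inl (Or.inl ⟨u, hz, rfl⟩)
      · exact Or.inl (Or.inr ⟨u, hz, rfl⟩)
      · refine Or.inr ⟨hz, ?_⟩
        fin_cases i
        · exact Or.inl rfl
        · exact Or.inr (Or.inl rfl)
        · exact Or.inr (Or.inr (Or.inl rfl))
        · exact Or.inr (Or.inr (Or.inr rfl))
    · rintro ((⟨u, hu, rfl⟩ | ⟨u, hu, rfl⟩) | ⟨hz, _⟩) <;> assumption
  have hd2 : Disjoint (Sum.inl '' (Sum.inl ⁻¹' S') : Set (V ⊕ V ⊕ Fin 4))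
      ((fun u : V => (Sum.inr (Sum.inl u) : V ⊕ V ⊕ Fin 4)) ''
        ((fun u : V => (Sum.inr (Sum.inl u) : V ⊕ V ⊕ Fin 4)) ⁻¹' S')) := by
    refine Set.disjoint_left.mpr ?_
    rintro z ⟨u, _, rfl⟩ ⟨u', _, heq⟩
    exact absurd heq (by simp)
  have hd1 : Disjoint ((Sum.inl '' (Sum.inl ⁻¹' S')) ∪
      ((fun u : V => (Sum.inr (Sum.inl u) : V ⊕ V ⊕ Fin 4)) ''
        ((fun u : V => (Sum.inr (Sum.inl u) : V ⊕ V ⊕ Fin 4)) ⁻¹' S')))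
      (S' ∩ {vk, vl, vm, vn}) := by
    refine Set.disjoint_left.mpr ?_
    rintro z (⟨u, _, rfl⟩ | ⟨u, _, rfl⟩) ⟨_, hsp⟩ <;> simp at hsp
  conv_lhs => rw [hdec]
  rw [Set.ncard_union_eq hd1 (Set.toFinite _) (Set.toFinite _),
    Set.ncard_union_eq hd2 (Set.toFinite _) (Set.toFinite _),
    Set.ncard_image_of_injective _ Sum.inl_injective,
    Set.ncard_image_of_injective _ hBinj]

variable {G : SimpleGraph V} {K I : Set V}

lemma count_base {S' : Set (V ⊕ V ⊕ Fin 4)}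
    (hdom : Dominates (splitBigExt G K I) S') :
    (Sum.inl ⁻¹' S' : Set V).ncard +
      ((fun u : V => (Sum.inr (Sum.inl u) : V ⊕ V ⊕ Fin 4)) ⁻¹' S' : Set V).ncard + 2
      ≤ S'.ncard := by
  rw [decomp S']
  have h2 : 2 ≤ (S' ∩ {vk, vl, vm, vn}).ncard := by
    obtain hx | hx := kl_mem hdom <;> obtain hy | hy := mn_mem hdom
    · calc 2 = ({vk, vm} : Set (V ⊕ V ⊕ Fin 4)).ncard := (Set.ncard_pair (by simp)).symm
        _ ≤ _ := Set.ncard_le_ncard (by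
            rintro z (rfl | rfl)
            exacts [⟨hx, by simp⟩, ⟨hy, by simp⟩]) (Set.toFinite _)
    · calc 2 = ({vk, vn} : Set (V ⊕ V ⊕ Fin 4)).ncard := (Set.ncard_pair (by simp)).symm
        _ ≤ _ := Set.ncard_le_ncard (by
            rintro z (rfl | rfl)
            exacts [⟨hx, by simp⟩, ⟨hy, by simp⟩]) (Set.toFinite _)
    · calc 2 = ({vl, vm} : Set (V ⊕ V ⊕ Fin 4)).ncard := (Set.ncard_pair (by simp)).symm
        _ ≤ _ := Set.ncard_le_ncard (by
            rintro z (rfl | rfl)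
            exacts [⟨hx, by simp⟩, ⟨hy, by simp⟩]) (Set.toFinite _)
    · calc 2 = ({vl, vn} : Set (V ⊕ V ⊕ Fin 4)).ncard := (Set.ncard_pair (by simp)).symm
        _ ≤ _ := Set.ncard_le_ncard (by
            rintro z (rfl | rfl)
            exacts [⟨hx, by simp⟩, ⟨hy, by simp⟩]) (Set.toFinite _)
  omega

lemma count_mn {S' : Set (V ⊕ V ⊕ Fin 4)}
    (hdom : Dominates (splitBigExt G K I) S') (hm : vm ∈ S') (hn : vn ∈ S') :
    (Sum.inl ⁻¹' S' : Set V).ncard +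
      ((fun u : V => (Sum.inr (Sum.inl u) : V ⊕ V ⊕ Fin 4)) ⁻¹' S' : Set V).ncard + 3
      ≤ S'.ncard := by
  rw [decomp S']
  have h3 : 3 ≤ (S' ∩ {vk, vl, vm, vn}).ncard := by
    obtain hx | hx := kl_mem hdom
    · calc 3 = ({vk, vm, vn} : Set (V ⊕ V ⊕ Fin 4)).ncard := by
            rw [Set.ncard_insert_of_notMem (by simp) (Set.toFinite _), Set.ncard_pair (by simp)]
        _ ≤ _ := Set.ncard_le_ncard (by
            rintro z (rfl | rfl | rfl)
            exacts [⟨hx, by simp⟩, ⟨hm, by simp⟩, ⟨hn, by simp⟩]) (Set.toFinite _)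
    · calc 3 = ({vl, vm, vn} : Set (V ⊕ V ⊕ Fin 4)).ncard := by
            rw [Set.ncard_insert_of_notMem (by simp) (Set.toFinite _), Set.ncard_pair (by simp)]
        _ ≤ _ := Set.ncard_le_ncard (by
            rintro z (rfl | rfl | rfl)
            exacts [⟨hx, by simp⟩, ⟨hm, by simp⟩, ⟨hn, by simp⟩]) (Set.toFinite _)
  omega

end SDWork8

namespace SDWork9
open SDWork SDWork2 SDWork3 SDWork4 SDWork5 SDWork7 SDWork8

variable {V : Type*} [Fintype V] {G : SimpleGraph V} {K I : Set V}

lemma preimage_swap (S' : Set (V ⊕ V ⊕ Fin 4)) :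
    (Sum.inl ⁻¹' ((swapE : (V ⊕ V ⊕ Fin 4) ≃ _) '' S') : Set V) =
      (fun u : V => (Sum.inr (Sum.inl u) : V ⊕ V ⊕ Fin 4)) ⁻¹' S' := by
  ext x
  simp only [Set.mem_preimage]
  constructor
  · rintro ⟨z, hz, heq⟩
    have heq' : swapF z = Sum.inl x := heq
    have h2 := congrArg (swapF (V := V)) heq'
    rw [swapF_inv z] at h2
    have hz2 : z = Sum.inr (Sum.inl x) := h2
    rwa [hz2] at hz
  · intro hz
    exact ⟨Sum.inr (Sum.inl x), hz, rfl⟩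

lemma extract (hpart : K ∪ I = Set.univ) (hdisj : Disjoint K I)
    (hK : G.IsClique K) (k₀ : ℕ) (hk₀ : 0 < k₀)
    (S' : Set (V ⊕ V ⊕ Fin 4)) (hS' : SecureDominates (splitBigExt G K I) S')
    (hcard : S'.ncard ≤ 2 * k₀ + 2)
    (hAB : (Sum.inl ⁻¹' S' : Set V).ncard ≤
      ((fun u : V => (Sum.inr (Sum.inl u) : V ⊕ V ⊕ Fin 4)) ⁻¹' S' : Set V).ncard) :
    ∃ S : Set V, SecureDominates G S ∧ S.ncard ≤ k₀ := by
  classical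
  set SA : Set V := Sum.inl ⁻¹' S' with hSAdef
  set SB : Set V := (fun u : V => (Sum.inr (Sum.inl u) : V ⊕ V ⊕ Fin 4)) ⁻¹' S' with hSBdef
  have hbase : SA.ncard + SB.ncard + 2 ≤ S'.ncard := count_base hS'.1
  have hF1 : ∀ x ∈ I, x ∉ SA → ∃ s, s ∈ SA ∧ s ∈ K ∧ G.Adj x s := by
    intro x hxI hxS
    obtain ⟨s, h1, h2, h3⟩ := sideA_F1 hdisj hS'.1 hxI hxS
    exact ⟨s, h1, h2, h3⟩
  have hF2 : ∀ x ∈ I, x ∉ SA → ∃ s, s ∈ SA ∧ s ∈ K ∧ G.Adj x s ∧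
      ∀ y ∈ I, y ∉ SA → y ≠ x → ∃ t, t ∈ SA ∧ t ∈ K ∧ t ≠ s ∧ G.Adj y t := by
    intro x hxI hxS
    obtain ⟨s, h1, h2, h3, h4⟩ := sideA_F2 hdisj hS' hxI hxS
    exact ⟨s, h1, h2, h3, fun y hyI hyS hne => h4 y hyI hyS hne⟩
  by_cases hbad : ∃ b, b ∈ K ∧ b ∉ SA ∧ (∀ w, w ∈ SA → w ∈ I → ¬G.Adj b w) ∧
      ¬∃ v, v ∈ SA ∧ v ∈ K ∧ ∀ y ∈ I, y ∉ SA →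
        (∃ t, t ∈ SA ∧ t ∈ K ∧ t ≠ v ∧ G.Adj y t) ∨ G.Adj y b
  · obtain ⟨b, hbK, hbSA, horph, hnov⟩ := hbad
    have hpriv : ∀ v, v ∈ SA → v ∈ K →
        ∃ y, y ∈ I ∧ y ∉ SA ∧ ∀ t, t ∈ SA → t ∈ K → G.Adj y t → t = v := by
      intro v hvSA hvK
      by_contra hcon
      apply hnov
      refine ⟨v, hvSA, hvK, ?_⟩
      intro y hyI hySA
      by_cases hadjb : G.Adj y b
      · exact Or.inr hadjb
      · by_cases hex : ∃ t, t ∈ SA ∧ t ∈ K ∧ t ≠ v ∧ G.Adj y t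
        · exact Or.inl hex
        · exfalso
          apply hcon
          refine ⟨y, hyI, hySA, ?_⟩
          intro t htSA htK hadj
          by_contra hne
          exact hex ⟨t, htSA, htK, hne, hadj⟩
    have hIle : I.ncard ≤ SA.ncard := ncard_I_le hdisj SA hF2 hpriv
    have hgoodset : SecureDominates G (insert b I) := by
      refine secure_of_conditions hpart hdisj hK _ ?_ ?_ ?_ ?_
      · intro x hxI hxS
        exact absurd (Set.mem_insert_of_mem b hxI) hxS
      · intro b' hb'K hb'S
        exact ⟨b, Set.mem_insert b _,
          hK hb'K hbK (fun h => hb'S (h ▸ Set.mem_insert b I))⟩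
      · intro x hxI hxS
        exact absurd (Set.mem_insert_of_mem b hxI) hxS
      · intro b' hb'K hb'S
        right
        refine ⟨b, Set.mem_insert b _, hbK, ?_⟩
        intro y hyI hyS
        exact absurd (Set.mem_insert_of_mem b hyI) hyS
    have hinscard : (insert b I).ncard ≤ I.ncard + 1 := Set.ncard_insert_le b I
    rcases sideA_defender hdisj hS' hbK hbSA (fun w hw hwI => horph w hw hwI) with
      ⟨v₀, hv₀S, hv₀K, hv₀⟩ | ⟨hm, hn⟩
    · by_cases hsmall : SA.ncard + 1 ≤ k₀
      · exact ⟨insert b I, hgoodset, by omega⟩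
      · have hSBcard : SB.ncard ≤ k₀ := by omega
        have hsec2 := secure_map swapE (fun a b => swap_adj a b) hS'
        have hpre : (Sum.inl ⁻¹' ((swapE : (V ⊕ V ⊕ Fin 4) ≃ _) '' S') : Set V) = SB :=
          preimage_swap S'
        have toSB : ∀ {s : V}, vA s ∈ (swapE : (V ⊕ V ⊕ Fin 4) ≃ _) '' S' → s ∈ SB := by
          intro s hs
          have h0 : s ∈ (Sum.inl ⁻¹' ((swapE : (V ⊕ V ⊕ Fin 4) ≃ _) '' S') : Set V) := hs
          rwa [hpre] at h0
        have fromSB : ∀ {s : V}, s ∈ SB → vA s ∈ (swapE : (V ⊕ V ⊕ Fin 4) ≃ _) '' S' := by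
          intro s hs
          have h0 : s ∈ (Sum.inl ⁻¹' ((swapE : (V ⊕ V ⊕ Fin 4) ≃ _) '' S') : Set V) := by
            rwa [hpre]
          exact h0
        have hv₀SB : v₀ ∈ SB := hv₀S
        have hv₀' : ∀ y ∈ I, y ∉ SB → ∃ t, t ∈ SB ∧ t ∈ K ∧ t ≠ v₀ ∧ G.Adj y t :=
          fun y hyI hyS => hv₀ y hyI hyS
        have hF1B : ∀ x ∈ I, x ∉ SB → ∃ s, s ∈ SB ∧ s ∈ K ∧ G.Adj x s := by
          intro x hxI hxS
          obtain ⟨s, h1, h2, h3⟩ := sideA_F1 hdisj hsec2.1 hxI (fun hc => hxS (toSB hc))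
          exact ⟨s, toSB h1, h2, h3⟩
        have hF2B : ∀ x ∈ I, x ∉ SB → ∃ s, s ∈ SB ∧ s ∈ K ∧ G.Adj x s ∧
            ∀ y ∈ I, y ∉ SB → y ≠ x → ∃ t, t ∈ SB ∧ t ∈ K ∧ t ≠ s ∧ G.Adj y t := by
          intro x hxI hxS
          obtain ⟨s, h1, h2, h3, h4⟩ := sideA_F2 hdisj hsec2 hxI (fun hc => hxS (toSB hc))
          refine ⟨s, toSB h1, h2, h3, ?_⟩
          intro y hyI hyS hne
          obtain ⟨t, k1, k2, k3, k4⟩ := h4 y hyI (fun hc => hyS (toSB hc)) hne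
          exact ⟨t, toSB k1, k2, k3, k4⟩
        refine ⟨SB, secure_of_conditions hpart hdisj hK SB hF1B ?_ ?_ ?_, hSBcard⟩
        · intro b' hb'K hb'S
          exact ⟨v₀, hv₀SB, hK hb'K hv₀K (fun h => hb'S (h ▸ hv₀SB))⟩
        · intro x hxI hxS
          obtain ⟨s, h1, h2, h3, h4⟩ := hF2B x hxI hxS
          refine ⟨s, h1, h2, h3, h4, Or.inl ?_⟩
          by_cases hvs : v₀ = s
          · obtain ⟨t, ht1, ht2, ht3, _⟩ := hv₀' x hxI hxS
            exact ⟨t, ht1, ht2, fun h => ht3 (h.trans hvs.symm)⟩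
          · exact ⟨v₀, hv₀SB, hv₀K, hvs⟩
        · intro b' hb'K hb'S
          right
          refine ⟨v₀, hv₀SB, hv₀K, ?_⟩
          intro y hyI hyS
          exact Or.inl (hv₀' y hyI hyS)
    · have h3 : SA.ncard + SB.ncard + 3 ≤ S'.ncard := count_mn hS'.1 hm hn
      have hsmall : SA.ncard + 1 ≤ k₀ := by omega
      exact ⟨insert b I, hgoodset, by omega⟩
  · have hgood : ∀ b, b ∈ K → b ∉ SA → (∃ w, w ∈ SA ∧ w ∈ I ∧ G.Adj b w) ∨
        ∃ v, v ∈ SA ∧ v ∈ K ∧ ∀ y ∈ I, y ∉ SA →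
          (∃ t, t ∈ SA ∧ t ∈ K ∧ t ≠ v ∧ G.Adj y t) ∨ G.Adj y b := by
      intro b hbK hbS
      by_cases hor : ∃ w, w ∈ SA ∧ w ∈ I ∧ G.Adj b w
      · exact Or.inl hor
      · right
        by_contra hcon
        apply hbad
        refine ⟨b, hbK, hbS, ?_, hcon⟩
        intro w hw hwI hadj
        exact hor ⟨w, hw, hwI, hadj⟩
    have hSAcard : SA.ncard ≤ k₀ := by omega
    refine ⟨SA, secure_of_conditions hpart hdisj hK SA hF1 ?_ ?_ ?_, hSAcard⟩
    · intro b hbK hbS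
      rcases hgood b hbK hbS with ⟨w, h1, _, h3⟩ | ⟨v, h1, h2, _⟩
      · exact ⟨w, h1, h3⟩
      · exact ⟨v, h1, hK hbK h2 (fun h => hbS (h ▸ h1))⟩
    · intro x hxI hxS
      obtain ⟨s, h1, h2, h3, h4⟩ := hF2 x hxI hxS
      refine ⟨s, h1, h2, h3, h4, ?_⟩
      by_cases hex : ∃ t, t ∈ SA ∧ t ∈ K ∧ t ≠ s
      · exact Or.inl hex
      · right
        intro b hbK hbS
        rcases hgood b hbK hbS with ⟨w, hw1, hw2, hw3⟩ | ⟨v, hv1, hv2, hv3⟩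
        · exact Or.inl ⟨w, hw1, hw2, hw3⟩
        · rcases hv3 x hxI hxS with ⟨t, ht1, ht2, ht3, _⟩ | hadj
          · have hts : t = s := by
              by_contra hne
              exact hex ⟨t, ht1, ht2, hne⟩
            have hvs : v = s := by
              by_contra hne
              exact hex ⟨v, hv1, hv2, hne⟩
            exact absurd (hts.trans hvs.symm) ht3
          · exact Or.inr hadj.symm
    · intro b hbK hbS
      exact hgood b hbK hbS

end SDWork9

namespace SDWork10
open SDWork SDWork2 SDWork3 SDWork4 SDWork5 SDWork6 SDWork8

variable {V : Type*} {G : SimpleGraph V} {K I : Set V}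

lemma E1 (hpart : K ∪ I = Set.univ) (hI : ∀ a ∈ I, ∀ b ∈ I, ¬ G.Adj a b)
    {S : Set V} (hS : Dominates G S) :
    ∀ x ∈ I, x ∉ S → ∃ s, s ∈ S ∧ s ∈ K ∧ G.Adj x s := by
  intro x hxI hxS
  obtain ⟨v, hv, hadj⟩ := hS x hxS
  rcases mem_KI hpart v with hvK | hvI
  · exact ⟨v, hv, hvK, hadj⟩
  · exact absurd hadj (hI x hxI v hvI)

lemma E2 (hpart : K ∪ I = Set.univ) (hI : ∀ a ∈ I, ∀ b ∈ I, ¬ G.Adj a b)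
    {S : Set V} (hS : SecureDominates G S) :
    ∀ x ∈ I, x ∉ S → ∃ s, s ∈ S ∧ s ∈ K ∧ G.Adj x s ∧
      ∀ y ∈ I, y ∉ S → y ≠ x → ∃ t, t ∈ S ∧ t ∈ K ∧ t ≠ s ∧ G.Adj y t := by
  intro x hxI hxS
  obtain ⟨v, hv, hadj, hdom⟩ := hS.2 x hxS
  have hvK : v ∈ K := by
    rcases mem_KI hpart v with hvK | hvI
    · exact hvK
    · exact absurd hadj (hI x hxI v hvI)
  refine ⟨v, hv, hvK, hadj, ?_⟩
  intro y hyI hyS hne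
  have hmem : y ∉ (S \ {v}) ∪ {x} := by
    rintro (⟨h1, _⟩ | h1)
    · exact hyS h1
    · exact hne h1
  obtain ⟨t, htm, hadjyt⟩ := hdom y hmem
  rcases htm with ⟨htS, htv⟩ | htx
  · have htK : t ∈ K := by
      rcases mem_KI hpart t with h | h
      · exact h
      · exact absurd hadjyt (hI y hyI t h)
    exact ⟨t, htS, htK, by simpa using htv, hadjyt⟩
  · have : t = x := htx
    exact absurd (this ▸ hadjyt) (hI y hyI x hxI)

end SDWork10

section Main

open SDWork SDWork2 SDWork3 SDWork4 SDWork5 SDWork6 SDWork7 SDWork8 SDWork9 SDWork10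

variable {V : Type*} [Fintype V]

lemma preimage_swap2 (S' : Set (V ⊕ V ⊕ Fin 4)) :
    ((fun u : V => (Sum.inr (Sum.inl u) : V ⊕ V ⊕ Fin 4)) ⁻¹'
        ((swapE : (V ⊕ V ⊕ Fin 4) ≃ _) '' S') : Set V) = Sum.inl ⁻¹' S' := by
  ext x
  simp only [Set.mem_preimage]
  constructor
  · rintro ⟨z, hz, heq⟩
    have heq' : swapF z = Sum.inr (Sum.inl x) := heq
    have h2 := congrArg (swapF (V := V)) heq'
    rw [swapF_inv z] at h2
    have hz2 : z = Sum.inl x := h2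
    rwa [hz2] at hz
  · intro hz
    exact ⟨Sum.inl x, hz, rfl⟩

theorem splitBigExt_secureDomination_iff'
    (G : SimpleGraph V) (K I : Set V)
    (hpart : K ∪ I = Set.univ) (hdisj : Disjoint K I)
    (hK : G.IsClique K) (hI : ∀ a ∈ I, ∀ b ∈ I, ¬ G.Adj a b)
    (k₀ : ℕ) (hk₀ : 0 < k₀) :
    (∃ S : Set V, SecureDominates G S ∧ S.ncard ≤ k₀) ↔
      (∃ S' : Set (V ⊕ V ⊕ Fin 4),
        SecureDominates (splitBigExt G K I) S' ∧ S'.ncard ≤ 2 * k₀ + 2) := by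
  classical
  have hKI : ∀ {a : V}, a ∈ K → a ∈ I → False :=
    fun h h' => Set.disjoint_left.mp hdisj h h'
  have cardSF : ∀ D : Set V,
      ((vA '' D) ∪ ((vB : V → V ⊕ V ⊕ Fin 4) '' D) ∪ {vk, vm}).ncard ≤
        D.ncard + D.ncard + 2 := by
    intro D
    calc ((vA '' D) ∪ ((vB : V → V ⊕ V ⊕ Fin 4) '' D) ∪ {vk, vm}).ncard
        ≤ ((vA '' D) ∪ ((vB : V → V ⊕ V ⊕ Fin 4) '' D)).ncard +
            ({vk, vm} : Set (V ⊕ V ⊕ Fin 4)).ncard :=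
          Set.ncard_union_le _ _
      _ ≤ (vA '' D).ncard + ((vB : V → V ⊕ V ⊕ Fin 4) '' D).ncard +
            ({vk, vm} : Set (V ⊕ V ⊕ Fin 4)).ncard := by
          have := Set.ncard_union_le (vA '' D) ((vB : V → V ⊕ V ⊕ Fin 4) '' D)
          omega
      _ = D.ncard + D.ncard + 2 := by
          rw [Set.ncard_image_of_injective _ Sum.inl_injective,
            Set.ncard_image_of_injective _ hBinj, Set.ncard_pair (by simp)]
  constructor
  · rintro ⟨S, hS, hcard⟩
    by_cases P4 : ∀ a, a ∈ K → a ∉ S → (∃ w, w ∈ S ∧ w ∈ I ∧ G.Adj a w) ∨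
        ∃ v, v ∈ S ∧ v ∈ K ∧ ∀ y ∈ I, y ∉ S →
          ∃ t, t ∈ S ∧ t ∈ K ∧ t ≠ v ∧ G.Adj y t
    · refine ⟨(vA '' S) ∪ ((vB : V → V ⊕ V ⊕ Fin 4) '' S) ∪ {vk, vm}, ?_, ?_⟩
      · refine forward_secure hpart hdisj S (E1 hpart hI hS.1) ?_ (E2 hpart hI hS) P4
        by_cases hex : ∃ v, v ∈ S ∧ v ∈ K
        · exact Or.inl hex
        · right
          intro b hbK hbS
          obtain ⟨z, hz, hadj⟩ := hS.1 b hbS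
          rcases mem_KI hpart z with hzK | hzI
          · exact absurd ⟨z, hz, hzK⟩ hex
          · exact ⟨z, hz, hzI, hadj⟩
      · have := cardSF S
        omega
    · -- bad case : use D = I
      have ⟨a, haK, haS, hno1, hno2⟩ : ∃ a, a ∈ K ∧ a ∉ S ∧
          (¬∃ w, w ∈ S ∧ w ∈ I ∧ G.Adj a w) ∧
          ¬∃ v, v ∈ S ∧ v ∈ K ∧ ∀ y ∈ I, y ∉ S →
            ∃ t, t ∈ S ∧ t ∈ K ∧ t ≠ v ∧ G.Adj y t := by
        by_contra hne
        apply P4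
        intro a haK haS
        by_cases c1' : ∃ w, w ∈ S ∧ w ∈ I ∧ G.Adj a w
        · exact Or.inl c1'
        · by_cases c2' : ∃ v, v ∈ S ∧ v ∈ K ∧ ∀ y ∈ I, y ∉ S →
              ∃ t, t ∈ S ∧ t ∈ K ∧ t ≠ v ∧ G.Adj y t
          · exact Or.inr c2'
          · exact absurd ⟨a, haK, haS, c1', c2'⟩ hne
      have hpriv : ∀ v, v ∈ S → v ∈ K →
          ∃ y, y ∈ I ∧ y ∉ S ∧ G.Adj y v ∧ ∀ t, t ∈ S → G.Adj y t → t = v := by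
        intro v hvS hvK
        by_contra hny
        apply hno2
        refine ⟨v, hvS, hvK, ?_⟩
        intro y hyI hyS
        by_cases hext : ∃ t, t ∈ S ∧ t ∈ K ∧ t ≠ v ∧ G.Adj y t
        · exact hext
        · exfalso
          apply hny
          obtain ⟨s, hsS, hsK, hadj⟩ := E1 hpart hI hS.1 y hyI hyS
          have hsv : s = v := by
            by_contra hne
            exact hext ⟨s, hsS, hsK, hne, hadj⟩
          refine ⟨y, hyI, hyS, hsv ▸ hadj, ?_⟩
          intro t htS hadjt
          rcases mem_KI hpart t with htK | htI
          · by_contra hne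
            exact hext ⟨t, htS, htK, hne, hadjt⟩
          · exact absurd hadjt (hI y hyI t htI)
      have hIle : I.ncard ≤ S.ncard := by
        refine ncard_I_le hdisj S (E2 hpart hI hS) ?_
        intro v hvS hvK
        obtain ⟨y, h1, h2, _, h4⟩ := hpriv v hvS hvK
        exact ⟨y, h1, h2, fun t htS _ hadj => h4 t htS hadj⟩
      have hKneigh : ∀ b ∈ K, ∃ y ∈ I, G.Adj b y := by
        intro b hbK
        by_cases hbS : b ∈ S
        · obtain ⟨y, hyI, _, hadj, _⟩ := hpriv b hbS hbK
          exact ⟨y, hyI, hadj.symm⟩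
        · by_cases hbw : ∃ w, w ∈ S ∧ w ∈ I ∧ G.Adj b w
          · obtain ⟨w, _, hwI, hadj⟩ := hbw
            exact ⟨w, hwI, hadj⟩
          · obtain ⟨v, hv, hadj, hdom⟩ := hS.2 b hbS
            have hvK : v ∈ K := by
              rcases mem_KI hpart v with h | h
              · exact h
              · exact absurd ⟨v, hv, h, hadj⟩ hbw
            obtain ⟨y, hyI, hyS, _, hyuniq⟩ := hpriv v hv hvK
            have hyb : y ≠ b := fun h => hKI hbK (h ▸ hyI)
            have hmem : y ∉ (S \ {v}) ∪ {b} := by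
              rintro (⟨h1, _⟩ | h1)
              · exact hyS h1
              · exact hyb h1
            obtain ⟨t, htm, hadjyt⟩ := hdom y hmem
            rcases htm with ⟨htS, htv⟩ | htb
            · exact absurd (hyuniq t htS hadjyt) (by simpa using htv)
            · have : t = b := htb
              exact ⟨y, hyI, (this ▸ hadjyt).symm⟩
      refine ⟨(vA '' I) ∪ ((vB : V → V ⊕ V ⊕ Fin 4) '' I) ∪ {vk, vm}, ?_, ?_⟩
      · refine forward_secure hpart hdisj I ?_ ?_ ?_ ?_
        · intro x hxI hxS
          exact absurd hxI hxS
        · right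
          intro b hbK hbD
          obtain ⟨y, hyI, hadj⟩ := hKneigh b hbK
          exact ⟨y, hyI, hyI, hadj⟩
        · intro x hxI hxS
          exact absurd hxI hxS
        · intro a' ha'K ha'D
          left
          obtain ⟨y, hyI, hadj⟩ := hKneigh a' ha'K
          exact ⟨y, hyI, hyI, hadj⟩
      · have := cardSF I
        omega
  · rintro ⟨S', hS', hcard⟩
    by_cases hAB : (Sum.inl ⁻¹' S' : Set V).ncard ≤
        ((fun u : V => (Sum.inr (Sum.inl u) : V ⊕ V ⊕ Fin 4)) ⁻¹' S' : Set V).ncard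
    · exact extract hpart hdisj hK k₀ hk₀ S' hS' hcard hAB
    · have hsec2 := secure_map swapE (fun a b => swap_adj a b) hS'
      have hcard2 : ((swapE : (V ⊕ V ⊕ Fin 4) ≃ _) '' S').ncard ≤ 2 * k₀ + 2 := by
        rwa [Set.ncard_image_of_injective _ (swapE (V := V)).injective]
      refine extract hpart hdisj hK k₀ hk₀ _ hsec2 hcard2 ?_
      rw [preimage_swap S', preimage_swap2 S']
      omega

end Main

theorem splitBigExt_secureDomination_iff {V : Type*} [Fintype V]
    (G : SimpleGraph V) (K I : Set V)
    (hpart : K ∪ I = Set.univ) (hdisj : Disjoint K I)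
    (hK : G.IsClique K) (hI : ∀ a ∈ I, ∀ b ∈ I, ¬ G.Adj a b)
    (k₀ : ℕ) (hk₀ : 0 < k₀) :
    (∃ S : Set V, SecureDominates G S ∧ S.ncard ≤ k₀) ↔
      (∃ S' : Set (V ⊕ V ⊕ Fin 4),
        SecureDominates (splitBigExt G K I) S' ∧ S'.ncard ≤ 2 * k₀ + 2) :=
  splitBigExt_secureDomination_iff' G K I hpart hdisj hK hI k₀ hk₀
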